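/- Let F be a nonempty face of GZ(λ). Then F is covered by the tableau regions: F equals the union, over all shifted Young tableaux T associated to F, of the closed sets R_T := {x ∈ F : x_{i,j} ≥ x_{k,ℓ} for all pairs of positions with T(i,j) ≤ T(k,ℓ)} (with the convention x_{i,i} = λ_i). -/

import Mathlib

open MeasureTheory

/-- Off-diagonal positions `(i,j)` with `1 ≤ i < j ≤ n` (1-indexed, encoded in `Fin (n+1)`). -/
abbrev GZpos (n : ℕ) := {p : Fin (n + 1) × Fin (n + 1) // 0 < (p.1 : ℕ) ∧ (p.1 : ℕ) < (p.2 : ℕ)}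

/-- The entry `x_{i,j}` of the extended Gelfand–Zetlin array, with the convention
`x_{i,i} = λ_i` (and value `λ_i` for out-of-range indices, which are never used). -/
def entry (n : ℕ) (lam : ℕ → ℝ) (x : GZpos n → ℝ) (i j : ℕ) : ℝ :=
  if h : 0 < i ∧ i < j ∧ j ≤ n then
    x ⟨(⟨i, by omega⟩, ⟨j, by omega⟩), ⟨h.1, h.2.1⟩⟩
  else lam i

/-- The Gelfand–Zetlin polytope `GZ(λ)` in `ℝ^{n(n-1)/2}`. -/
def GZ (n : ℕ) (lam : ℕ → ℝ) : Set (GZpos n → ℝ) :=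
  {x | ∀ i j : ℕ, 0 < i → i ≤ j → j + 1 ≤ n →
    entry n lam x i (j + 1) ≤ entry n lam x i j ∧
    entry n lam x (i + 1) (j + 1) ≤ entry n lam x i (j + 1)}

/-- A position `(i,j)` of the triangular array: `1 ≤ i ≤ j ≤ n`. -/
def InTri (n i j : ℕ) : Prop := 0 < i ∧ i ≤ j ∧ j ≤ n

/-- An adjacent-pair equality: `((i,j), true)` is the row equality `x_{i,j} = x_{i,j+1}`,
`((i,j), false)` is the column equality `x_{i,j} = x_{i+1,j}`. -/
def IsEqn (n : ℕ) (e : (ℕ × ℕ) × Bool) : Prop :=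
  0 < e.1.1 ∧ e.1.1 ≤ e.1.2 ∧ e.1.2 ≤ n ∧
    (if e.2 then e.1.2 + 1 ≤ n else e.1.1 + 1 ≤ e.1.2)

/-- The equality `e` holds at the point `x`. -/
def eqHolds (n : ℕ) (lam : ℕ → ℝ) (x : GZpos n → ℝ) (e : (ℕ × ℕ) × Bool) : Prop :=
  if e.2 then entry n lam x e.1.1 e.1.2 = entry n lam x e.1.1 (e.1.2 + 1)
  else entry n lam x e.1.1 e.1.2 = entry n lam x (e.1.1 + 1) e.1.2

/-- The face of `GZ(λ)` cut out by the set `E` of adjacent-pair equalities. -/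
def face (n : ℕ) (lam : ℕ → ℝ) (E : Set ((ℕ × ℕ) × Bool)) : Set (GZpos n → ℝ) :=
  {x ∈ GZ n lam | ∀ e ∈ E, eqHolds n lam x e}

/-- A shifted Young tableau associated to the face `F`: values in `{1,…,M}` (0 outside the
triangle), no value gaps, weakly increasing in rows and columns, with equal adjacent entries
exactly where the corresponding equality holds identically on `F`. -/
def IsShYT (n : ℕ) (lam : ℕ → ℝ) (F : Set (GZpos n → ℝ)) (T : ℕ → ℕ → ℕ) : Prop :=
  (∀ i j, ¬ InTri n i j → T i j = 0) ∧
  (∀ i j, InTri n i j → 1 ≤ T i j) ∧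
  (∀ m, 1 ≤ m → (∃ i j, InTri n i j ∧ m ≤ T i j) → ∃ i j, InTri n i j ∧ T i j = m) ∧
  (∀ i j, 0 < i → i ≤ j → j + 1 ≤ n → T i j ≤ T i (j + 1)) ∧
  (∀ i j, 0 < i → i + 1 ≤ j → j ≤ n → T i j ≤ T (i + 1) j) ∧
  (∀ i j, 0 < i → i ≤ j → j + 1 ≤ n →
    (T i j = T i (j + 1) ↔ ∀ x ∈ F, entry n lam x i j = entry n lam x i (j + 1))) ∧
  (∀ i j, 0 < i → i + 1 ≤ j → j ≤ n →
    (T i j = T (i + 1) j ↔ ∀ x ∈ F, entry n lam x i j = entry n lam x (i + 1) j))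

/-- The diagonal condition `T(i,i) = i + p_1 + ⋯ + p_{i-1}`. -/
def hasDiag (n : ℕ) (T : ℕ → ℕ → ℕ) (p : ℕ → ℕ) : Prop :=
  ∀ i, 1 ≤ i → i ≤ n → T i i = i + ∑ k ∈ Finset.Ico 1 i, p k

/-- `N_F(p_1,…,p_{n-1})`: the number of shifted Young tableaux associated to `F` with
diagonal vector determined by `p`. -/
noncomputable def NF (n : ℕ) (lam : ℕ → ℝ) (F : Set (GZpos n → ℝ)) (p : ℕ → ℕ) : ℕ :=
  Set.ncard {T : ℕ → ℕ → ℕ | IsShYT n lam F T ∧ hasDiag n T p}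

/-- All positions `(i,j)` with `1 ≤ i ≤ j ≤ n` (including the diagonal). -/
abbrev Tri (n : ℕ) := {p : Fin (n + 1) × Fin (n + 1) // 0 < (p.1 : ℕ) ∧ (p.1 : ℕ) ≤ (p.2 : ℕ)}

/-- The value of the (extended) coordinate at a triangular position. -/
def entryT (n : ℕ) (lam : ℕ → ℝ) (x : GZpos n → ℝ) (p : Tri n) : ℝ :=
  entry n lam x (p.1.1 : ℕ) (p.1.2 : ℕ)

/-- `q` is the east or south neighbour of `p`. -/
def adjTri (n : ℕ) (p q : Tri n) : Prop :=
  ((q.1.1 : ℕ) = (p.1.1 : ℕ) ∧ (q.1.2 : ℕ) = (p.1.2 : ℕ) + 1) ∨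
  ((q.1.1 : ℕ) = (p.1.1 : ℕ) + 1 ∧ (q.1.2 : ℕ) = (p.1.2 : ℕ))

/-- The equivalence relation on positions generated by the adjacent-pair equalities holding
identically on `F`. -/
def faceSetoid (n : ℕ) (lam : ℕ → ℝ) (F : Set (GZpos n → ℝ)) : Setoid (Tri n) :=
  ⟨Relation.EqvGen (fun p q => adjTri n p q ∧ ∀ x ∈ F, entryT n lam x p = entryT n lam x q),
   Relation.EqvGen.is_equivalence _⟩

/-- A class is free if it contains no diagonal position. -/
def isFreeClass (n : ℕ) (lam : ℕ → ℝ) (F : Set (GZpos n → ℝ))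
    (c : Quotient (faceSetoid n lam F)) : Prop :=
  ∀ p : Tri n, Quotient.mk (faceSetoid n lam F) p = c → (p.1.1 : ℕ) ≠ (p.1.2 : ℕ)

/-- The volume of a face `F`: the Lebesgue measure of the image of `F` under the projection
selecting one coordinate from each free class. -/
noncomputable def faceVol (n : ℕ) (lam : ℕ → ℝ) (F : Set (GZpos n → ℝ)) : ℝ := by
  classical
  letI : Fintype (Quotient (faceSetoid n lam F)) := Quotient.fintype _
  exact (volume ((fun x (c : {c : Quotient (faceSetoid n lam F) // isFreeClass n lam F c}) =>
    entryT n lam x (Quotient.out c.1)) '' F)).toReal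

section AuxShYT

attribute [local instance] Classical.propDecidable

lemma gz_row {n : ℕ} {lam : ℕ → ℝ} {x : GZpos n → ℝ} (hx : x ∈ GZ n lam)
    {i j : ℕ} (hi : 0 < i) (hij : i ≤ j) (hj : j + 1 ≤ n) :
    entry n lam x i (j + 1) ≤ entry n lam x i j := (hx i j hi hij hj).1

lemma gz_col {n : ℕ} {lam : ℕ → ℝ} {x : GZpos n → ℝ} (hx : x ∈ GZ n lam)
    {i j : ℕ} (hi : 0 < i) (hij : i + 1 ≤ j) (hj : j ≤ n) :
    entry n lam x (i + 1) j ≤ entry n lam x i j := by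
  obtain ⟨j', rfl⟩ : ∃ j', j = j' + 1 := ⟨j - 1, by omega⟩
  exact (hx i j' hi (by omega) hj).2

/-- A witness point where the equality `e` fails, if one exists in `F`; otherwise `x`. -/
noncomputable def pick (n : ℕ) (lam : ℕ → ℝ) (F : Set (GZpos n → ℝ)) (x : GZpos n → ℝ)
    (e : (ℕ × ℕ) × Bool) : GZpos n → ℝ :=
  if h : ∃ z ∈ F, ¬ eqHolds n lam z e then h.choose else x

lemma pick_mem {n : ℕ} {lam : ℕ → ℝ} {F : Set (GZpos n → ℝ)} {x : GZpos n → ℝ}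
    (hx : x ∈ F) (e : (ℕ × ℕ) × Bool) : pick n lam F x e ∈ F := by
  by_cases h : ∃ z ∈ F, ¬ eqHolds n lam z e
  · rw [pick, dif_pos h]; exact h.choose_spec.1
  · rw [pick, dif_neg h]; exact hx

lemma pick_strict {n : ℕ} {lam : ℕ → ℝ} {F : Set (GZpos n → ℝ)} {x : GZpos n → ℝ}
    {e : (ℕ × ℕ) × Bool} (h : ∃ z ∈ F, ¬ eqHolds n lam z e) :
    ¬ eqHolds n lam (pick n lam F x e) e := by
  rw [pick, dif_pos h]; exact h.choose_spec.2

/-- All possible adjacent-pair equalities. -/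
noncomputable def Eqs (n : ℕ) : Finset ((ℕ × ℕ) × Bool) :=
  ((Finset.range (n+1) ×ˢ Finset.range (n+1)) ×ˢ (Finset.univ : Finset Bool)).filter
    (fun e => IsEqn n e)

lemma mem_Eqs {n : ℕ} {e : (ℕ × ℕ) × Bool} : e ∈ Eqs n ↔ IsEqn n e := by
  constructor
  · exact fun h => (Finset.mem_filter.1 h).2
  · intro h
    have h' := h
    obtain ⟨h1, h2, h3, _⟩ := h'
    refine Finset.mem_filter.2 ⟨Finset.mem_product.2 ⟨Finset.mem_product.2 ⟨?_, ?_⟩,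
      Finset.mem_univ _⟩, h⟩ <;> simp [Finset.mem_range] <;> omega

/-- All triangular positions. -/
noncomputable def Pos (n : ℕ) : Finset (ℕ × ℕ) :=
  ((Finset.range (n+1)) ×ˢ (Finset.range (n+1))).filter (fun p => InTri n p.1 p.2)

lemma mem_Pos {n : ℕ} {p : ℕ × ℕ} : p ∈ Pos n ↔ InTri n p.1 p.2 := by
  constructor
  · exact fun h => (Finset.mem_filter.1 h).2
  · intro h
    have h' := h
    obtain ⟨h1, h2, h3⟩ := h'
    refine Finset.mem_filter.2 ⟨Finset.mem_product.2 ⟨?_, ?_⟩, h⟩ <;>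
      simp [Finset.mem_range] <;> omega

/-- Sum of the entry over all witness points. -/
noncomputable def Sfun (n : ℕ) (lam : ℕ → ℝ) (F : Set (GZpos n → ℝ)) (x : GZpos n → ℝ)
    (i j : ℕ) : ℝ :=
  ∑ e ∈ Eqs n, entry n lam (pick n lam F x e) i j

/-- Lexicographic comparison value attached to a position. -/
noncomputable def wfun (n : ℕ) (lam : ℕ → ℝ) (F : Set (GZpos n → ℝ)) (x : GZpos n → ℝ)
    (p : ℕ × ℕ) : ℝ ×ₗ ℝ :=
  toLex (-(entry n lam x p.1 p.2), -(Sfun n lam F x p.1 p.2))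

/-- Rank of a position: number of distinct `wfun` values at most `wfun p`. -/
noncomputable def rankf (n : ℕ) (lam : ℕ → ℝ) (F : Set (GZpos n → ℝ)) (x : GZpos n → ℝ)
    (p : ℕ × ℕ) : ℕ :=
  (((Pos n).filter (fun q => wfun n lam F x q ≤ wfun n lam F x p)).image (wfun n lam F x)).card

section Key

variable {n : ℕ} {lam : ℕ → ℝ} {F : Set (GZpos n → ℝ)} {x : GZpos n → ℝ}

lemma w_key (hF : F ⊆ GZ n lam) (hx : x ∈ F) {p q : ℕ × ℕ} {e₀ : (ℕ × ℕ) × Bool}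
    (hpq : ∀ z ∈ F, entry n lam z q.1 q.2 ≤ entry n lam z p.1 p.2)
    (he : e₀ ∈ Eqs n)
    (he2 : ∀ z, eqHolds n lam z e₀ ↔ entry n lam z p.1 p.2 = entry n lam z q.1 q.2) :
    wfun n lam F x p ≤ wfun n lam F x q ∧
    (wfun n lam F x p = wfun n lam F x q ↔
      ∀ z ∈ F, entry n lam z p.1 p.2 = entry n lam z q.1 q.2) := by
  by_cases hId : ∀ z ∈ F, entry n lam z p.1 p.2 = entry n lam z q.1 q.2
  · have hex : entry n lam x p.1 p.2 = entry n lam x q.1 q.2 := hId x hx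
    have hS : Sfun n lam F x p.1 p.2 = Sfun n lam F x q.1 q.2 :=
      Finset.sum_congr rfl fun e _ => hId _ (pick_mem hx e)
    have hw : wfun n lam F x p = wfun n lam F x q := by
      unfold wfun; rw [hex, hS]
    exact ⟨hw.le, ⟨fun _ => hId, fun _ => hw⟩⟩
  · push_neg at hId
    obtain ⟨z₀, hz₀, hz₀ne⟩ := hId
    have hwit : ∃ z ∈ F, ¬ eqHolds n lam z e₀ :=
      ⟨z₀, hz₀, fun h => hz₀ne ((he2 z₀).1 h)⟩
    have hstrict : entry n lam (pick n lam F x e₀) q.1 q.2 <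
        entry n lam (pick n lam F x e₀) p.1 p.2 :=
      lt_of_le_of_ne (hpq _ (pick_mem hx e₀))
        (fun h => pick_strict hwit ((he2 _).2 h.symm))
    have hSlt : Sfun n lam F x q.1 q.2 < Sfun n lam F x p.1 p.2 :=
      Finset.sum_lt_sum (fun e _ => hpq _ (pick_mem hx e)) ⟨e₀, he, hstrict⟩
    have hexle : entry n lam x q.1 q.2 ≤ entry n lam x p.1 p.2 := hpq x hx
    have hwlt : wfun n lam F x p < wfun n lam F x q := by
      unfold wfun
      rw [Prod.Lex.lt_iff]
      rcases lt_or_eq_of_le hexle with h | h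
      · left; simpa using h
      · right; exact ⟨by rw [h]; rfl, by simpa using hSlt⟩
    refine ⟨hwlt.le, ⟨fun h => absurd h hwlt.ne, fun h => absurd (h z₀ hz₀) hz₀ne⟩⟩

lemma rank_mono {p q : ℕ × ℕ} (hw : wfun n lam F x p ≤ wfun n lam F x q) :
    rankf n lam F x p ≤ rankf n lam F x q := by
  refine Finset.card_le_card (Finset.image_subset_image ?_)
  intro r hr
  rw [Finset.mem_filter] at hr ⊢
  exact ⟨hr.1, hr.2.trans hw⟩

lemma rank_strict {p q : ℕ × ℕ} (hq : q ∈ Pos n)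
    (hw : wfun n lam F x p < wfun n lam F x q) :
    rankf n lam F x p < rankf n lam F x q := by
  refine Finset.card_lt_card ?_
  rw [Finset.ssubset_iff_of_subset]
  · refine ⟨wfun n lam F x q, ?_, ?_⟩
    · exact Finset.mem_image.2 ⟨q, Finset.mem_filter.2 ⟨hq, le_refl _⟩, rfl⟩
    · intro hc
      obtain ⟨r, hr, hrq⟩ := Finset.mem_image.1 hc
      have := (Finset.mem_filter.1 hr).2
      rw [hrq] at this
      exact absurd this (not_le.2 hw)
  · refine Finset.image_subset_image ?_
    intro r hr
    rw [Finset.mem_filter] at hr ⊢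
    exact ⟨hr.1, hr.2.trans hw.le⟩

lemma rank_le_w {p q : ℕ × ℕ} (hp : p ∈ Pos n)
    (h : rankf n lam F x p ≤ rankf n lam F x q) :
    wfun n lam F x p ≤ wfun n lam F x q := by
  by_contra hc
  push_neg at hc
  exact absurd h (not_le.2 (rank_strict hp hc))

lemma rank_one_le {p : ℕ × ℕ} (hp : p ∈ Pos n) : 1 ≤ rankf n lam F x p :=
  Finset.card_pos.2 ⟨wfun n lam F x p,
    Finset.mem_image.2 ⟨p, Finset.mem_filter.2 ⟨hp, le_refl _⟩, rfl⟩⟩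

lemma rank_step {q : ℕ × ℕ} (hq : q ∈ Pos n) (h2 : 2 ≤ rankf n lam F x q) :
    ∃ p ∈ Pos n, rankf n lam F x p + 1 = rankf n lam F x q := by
  set w := wfun n lam F x with hwdef
  -- find a position with strictly smaller w-value
  have h2' : 1 < (((Pos n).filter (fun r => w r ≤ w q)).image w).card := h2
  obtain ⟨a, ha, b, hb, hab⟩ := Finset.one_lt_card.1 h2'
  have hex : ∃ r ∈ Pos n, w r < w q := by
    have : ∃ v ∈ ((Pos n).filter (fun r => w r ≤ w q)).image w, v ≠ w q := by
      by_cases hA : a = w q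
      · exact ⟨b, hb, by rw [← hA]; exact fun h => hab h.symm⟩
      · exact ⟨a, ha, hA⟩
    obtain ⟨v, hv, hvq⟩ := this
    obtain ⟨r, hr, hrv⟩ := Finset.mem_image.1 hv
    obtain ⟨hrP, hrle⟩ := Finset.mem_filter.1 hr
    subst hrv
    exact ⟨r, hrP, lt_of_le_of_ne hrle hvq⟩
  obtain ⟨r₀, hr₀P, hr₀lt⟩ := hex
  have hAne : ((Pos n).filter (fun t => w t < w q)).Nonempty :=
    ⟨r₀, Finset.mem_filter.2 ⟨hr₀P, hr₀lt⟩⟩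
  obtain ⟨p, hpA, hpmax⟩ := Finset.exists_max_image _ w hAne
  obtain ⟨hpP, hplt⟩ := Finset.mem_filter.1 hpA
  refine ⟨p, hpP, ?_⟩
  have hset : ((Pos n).filter (fun r => w r ≤ w q)).image w =
      insert (w q) (((Pos n).filter (fun r => w r ≤ w p)).image w) := by
    ext v
    simp only [Finset.mem_insert, Finset.mem_image, Finset.mem_filter]
    constructor
    · rintro ⟨r, ⟨hrP, hrle⟩, rfl⟩
      by_cases hrq : w r = w q
      · exact Or.inl hrq
      · refine Or.inr ⟨r, ⟨hrP, ?_⟩, rfl⟩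
        exact hpmax r (Finset.mem_filter.2 ⟨hrP, lt_of_le_of_ne hrle hrq⟩)
    · rintro (rfl | ⟨r, ⟨hrP, hrle⟩, rfl⟩)
      · exact ⟨q, ⟨hq, le_refl _⟩, rfl⟩
      · exact ⟨r, ⟨hrP, le_trans (hrle.trans hplt.le) (le_refl _)⟩, rfl⟩
  have hnm : w q ∉ ((Pos n).filter (fun r => w r ≤ w p)).image w := by
    intro hc
    obtain ⟨r, hr, hrq⟩ := Finset.mem_image.1 hc
    have := (Finset.mem_filter.1 hr).2
    rw [hrq] at this
    exact absurd this (not_le.2 hplt)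
  show (((Pos n).filter (fun r => w r ≤ w p)).image w).card + 1 =
    (((Pos n).filter (fun r => w r ≤ w q)).image w).card
  rw [hset, Finset.card_insert_of_notMem hnm]

lemma rank_gap {m : ℕ} (hm : 1 ≤ m) {q : ℕ × ℕ} (hq : q ∈ Pos n)
    (hmq : m ≤ rankf n lam F x q) : ∃ p ∈ Pos n, rankf n lam F x p = m := by
  obtain ⟨k, hk⟩ : ∃ k, rankf n lam F x q = m + k := ⟨rankf n lam F x q - m, by omega⟩
  clear hmq
  induction k generalizing q with
  | zero => exact ⟨q, hq, by omega⟩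
  | succ k ih =>
    obtain ⟨p, hp, hpk⟩ := rank_step (lam := lam) (F := F) (x := x) hq (by omega)
    exact ih hp (by omega)

lemma exists_shyt (hF : F ⊆ GZ n lam) (hx : x ∈ F) :
    ∃ T : ℕ → ℕ → ℕ, IsShYT n lam F T ∧
      ∀ i j k l, InTri n i j → InTri n k l → T i j ≤ T k l →
        entry n lam x k l ≤ entry n lam x i j := by
  have hrow : ∀ i j, 0 < i → i ≤ j → j + 1 ≤ n →
      wfun n lam F x (i, j) ≤ wfun n lam F x (i, j + 1) ∧
      (wfun n lam F x (i, j) = wfun n lam F x (i, j + 1) ↔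
        ∀ z ∈ F, entry n lam z i j = entry n lam z i (j + 1)) := by
    intro i j hi hij hj
    refine w_key hF hx (p := (i, j)) (q := (i, j + 1)) (e₀ := ((i, j), true))
      (fun z hz => gz_row (hF hz) hi hij hj)
      (mem_Eqs.2 ?_) (fun z => by simp [eqHolds])
    simp [IsEqn]
    omega
  have hcol : ∀ i j, 0 < i → i + 1 ≤ j → j ≤ n →
      wfun n lam F x (i, j) ≤ wfun n lam F x (i + 1, j) ∧
      (wfun n lam F x (i, j) = wfun n lam F x (i + 1, j) ↔
        ∀ z ∈ F, entry n lam z i j = entry n lam z (i + 1) j) := by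
    intro i j hi hij hj
    refine w_key hF hx (p := (i, j)) (q := (i + 1, j)) (e₀ := ((i, j), false))
      (fun z hz => gz_col (hF hz) hi hij hj)
      (mem_Eqs.2 ?_) (fun z => by simp [eqHolds])
    simp [IsEqn]
    omega
  refine ⟨fun i j => if InTri n i j then rankf n lam F x (i, j) else 0,
    ⟨?_, ?_, ?_, ?_, ?_, ?_, ?_⟩, ?_⟩
  · intro i j hnot; simp only []; exact if_neg hnot
  · intro i j h; simp only []; rw [if_pos h]; exact rank_one_le (mem_Pos.2 h)
  · rintro m hm ⟨i, j, hij, hle⟩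
    simp only [] at hle
    rw [if_pos hij] at hle
    obtain ⟨p, hp, hrp⟩ := rank_gap hm (mem_Pos.2 hij) hle
    refine ⟨p.1, p.2, mem_Pos.1 hp, ?_⟩
    simp only []
    rw [if_pos (mem_Pos.1 hp)]
    exact hrp
  · intro i j hi hij hj
    have h1 : InTri n i j := ⟨hi, hij, by omega⟩
    have h2 : InTri n i (j + 1) := ⟨hi, by omega, hj⟩
    simp only []
    rw [if_pos h1, if_pos h2]
    exact rank_mono (hrow i j hi hij hj).1
  · intro i j hi hij hj
    have h1 : InTri n i j := ⟨hi, by omega, hj⟩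
    have h2 : InTri n (i + 1) j := ⟨by omega, hij, hj⟩
    simp only []
    rw [if_pos h1, if_pos h2]
    exact rank_mono (hcol i j hi hij hj).1
  · intro i j hi hij hj
    have h1 : InTri n i j := ⟨hi, hij, by omega⟩
    have h2 : InTri n i (j + 1) := ⟨hi, by omega, hj⟩
    simp only []
    rw [if_pos h1, if_pos h2]
    obtain ⟨hle, hiff⟩ := hrow i j hi hij hj
    constructor
    · intro heq
      by_contra hnid
      have hwne : wfun n lam F x (i, j) ≠ wfun n lam F x (i, j + 1) :=
        fun h => hnid (hiff.1 h)
      have := rank_strict (x := x) (mem_Pos.2 h2) (lt_of_le_of_ne hle hwne)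
      omega
    · intro hid
      have hw := hiff.2 hid
      simp only [rankf, hw]
  · intro i j hi hij hj
    have h1 : InTri n i j := ⟨hi, by omega, hj⟩
    have h2 : InTri n (i + 1) j := ⟨by omega, hij, hj⟩
    simp only []
    rw [if_pos h1, if_pos h2]
    obtain ⟨hle, hiff⟩ := hcol i j hi hij hj
    constructor
    · intro heq
      by_contra hnid
      have hwne : wfun n lam F x (i, j) ≠ wfun n lam F x (i + 1, j) :=
        fun h => hnid (hiff.1 h)
      have := rank_strict (x := x) (mem_Pos.2 h2) (lt_of_le_of_ne hle hwne)
      omega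
    · intro hid
      have hw := hiff.2 hid
      simp only [rankf, hw]
  · intro i j k l hij hkl hT
    simp only [] at hT
    rw [if_pos hij, if_pos hkl] at hT
    have hw := rank_le_w (mem_Pos.2 hij) hT
    unfold wfun at hw
    rw [Prod.Lex.le_iff] at hw
    rcases hw with h | ⟨h, _⟩
    · simp only [ofLex_toLex] at h; linarith
    · simp only [ofLex_toLex] at h; linarith

end Key

end AuxShYT

/-- a nonempty face `F` of `GZ(λ)` is the union, over shifted Young tableaux `T`
associated to `F`, of the regions `R_T = {x ∈ F : x_{i,j} ≥ x_{k,ℓ} whenever T(i,j) ≤ T(k,ℓ)}`. -/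
theorem stmt_9 (n : ℕ) (hn : 2 ≤ n) (lam : ℕ → ℝ)
    (hlam : ∀ i, 1 ≤ i → i < n → lam (i + 1) < lam i)
    (E : Set ((ℕ × ℕ) × Bool)) (hE : ∀ e ∈ E, IsEqn n e)
    (hne : (face n lam E).Nonempty) :
    face n lam E =
      ⋃ (T : ℕ → ℕ → ℕ) (_ : IsShYT n lam (face n lam E) T),
        {x ∈ face n lam E |
          ∀ i j k l, InTri n i j → InTri n k l → T i j ≤ T k l →
            entry n lam x k l ≤ entry n lam x i j} := by
  apply Set.Subset.antisymm
  · intro x hx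
    obtain ⟨T, hT, hreg⟩ := exists_shyt (F := face n lam E) (fun z hz => hz.1) hx
    exact Set.mem_iUnion.2 ⟨T, Set.mem_iUnion.2 ⟨hT, hx, hreg⟩⟩
  · intro x hx
    simp only [Set.mem_iUnion] at hx
    obtain ⟨T, hT, hx', _⟩ := hx
    exact hx'
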